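/- Let q ≤ c and t be positive integers with t ≤ q, and s_q, ..., s_c natural numbers with s_c > 0, satisfying N(3,t−1) = ∑_{j=q}^{c} N(3, j−t+1) s_j where N(3,d) = (d+1)(d+2)/2 (and N(3,d) = 0 for d < 0). Then N(4,t−1) + ∑_{j=q}^{c} N(4, j−t) s_j ≤ t(t+1)(c+3)/6, where N(4,d) = C(d+3,3) (and 0 for d < 0). -/

import Mathlib

/-- N(3,d) = (d+1)(d+2)/2 for d ≥ 0, and 0 for d < 0. -/
def N3' (d : ℤ) : ℤ := if 0 ≤ d then (d + 1) * (d + 2) / 2 else 0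

/-- N(4,d) = (d+1)(d+2)(d+3)/6 for d ≥ 0, and 0 for d < 0. -/
def N4' (d : ℤ) : ℤ := if 0 ≤ d then (d + 1) * (d + 2) * (d + 3) / 6 else 0

lemma six_dvd_aux (d : ℤ) : (6:ℤ) ∣ (d+1)*(d+2)*(d+3) := by
  have h : (((d+1)*(d+2)*(d+3) : ℤ) : ZMod 6) = 0 := by
    push_cast
    exact (by decide : ∀ z : ZMod 6, (z+1)*(z+2)*(z+3) = 0) (d : ZMod 6)
  exact (ZMod.intCast_zmod_eq_zero_iff_dvd _ 6).mp h

lemma two_dvd_aux (d : ℤ) : (2:ℤ) ∣ (d+1)*(d+2) := by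
  have h : (((d+1)*(d+2) : ℤ) : ZMod 2) = 0 := by
    push_cast
    exact (by decide : ∀ z : ZMod 2, (z+1)*(z+2) = 0) (d : ZMod 2)
  exact (ZMod.intCast_zmod_eq_zero_iff_dvd _ 2).mp h

lemma N4'_mul (d : ℤ) (h : 0 ≤ d) : 6 * N4' d = (d+1)*(d+2)*(d+3) := by
  rw [N4', if_pos h, Int.mul_ediv_cancel' (six_dvd_aux d)]

lemma N3'_mul (d : ℤ) (h : 0 ≤ d) : 2 * N3' d = (d+1)*(d+2) := by
  rw [N3', if_pos h, Int.mul_ediv_cancel' (two_dvd_aux d)]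

/-- If N(3,t−1) = ∑_{j=q}^{c} N(3,j−t+1) s_j, then
    N(4,t−1) + ∑_{j=q}^{c} N(4,j−t) s_j ≤ t(t+1)(c+3)/6. -/
theorem extremely_compressed_upper (t q c : ℤ) (s : ℤ → ℕ)
    (ht : 1 ≤ t) (hq : 1 ≤ q) (htq : t ≤ q) (hqc : q ≤ c) (hsc : 0 < s c)
    (hyp : N3' (t - 1) = ∑ j ∈ Finset.Icc q c, N3' (j - t + 1) * (s j : ℤ)) :
    N4' (t - 1) + ∑ j ∈ Finset.Icc q c, N4' (j - t) * (s j : ℤ) ≤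
      t * (t + 1) * (c + 3) / 6 := by
  have h1 : 6 * N4' (t-1) = t*(t+1)*(t+2) := by
    rw [N4'_mul _ (by omega)]; ring
  have h3t : 2 * N3' (t-1) = t*(t+1) := by
    rw [N3'_mul _ (by omega)]; ring
  have h2 : ∀ j ∈ Finset.Icc q c,
      6 * (N4' (j-t) * (s j : ℤ)) ≤ (c-t+1) * (2 * (N3' (j-t+1) * (s j : ℤ))) := by
    intro j hj
    simp only [Finset.mem_Icc] at hj
    have e4 : 6 * N4' (j-t) = (j-t+1)*((j-t+2)*(j-t+3)) := by
      rw [N4'_mul _ (by omega)]; ring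
    have e3 : 2 * N3' (j-t+1) = (j-t+2)*(j-t+3) := by
      rw [N3'_mul _ (by omega)]; ring
    have hs : (0:ℤ) ≤ (s j : ℤ) := Int.natCast_nonneg _
    have hfac : (0:ℤ) ≤ (j-t+2)*(j-t+3) := by nlinarith [hj.1, hj.2]
    calc 6 * (N4' (j-t) * (s j : ℤ)) = (6 * N4' (j-t)) * (s j : ℤ) := by ring
      _ = ((j-t+1)*((j-t+2)*(j-t+3))) * (s j : ℤ) := by rw [e4]
      _ ≤ ((c-t+1)*((j-t+2)*(j-t+3))) * (s j : ℤ) := by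
          apply mul_le_mul_of_nonneg_right _ hs
          exact mul_le_mul_of_nonneg_right (by omega) hfac
      _ = (c-t+1) * (2 * (N3' (j-t+1) * (s j : ℤ))) := by rw [← e3]; ring
  have hsum : ∑ j ∈ Finset.Icc q c, 6 * (N4' (j-t) * (s j : ℤ)) ≤
      ∑ j ∈ Finset.Icc q c, (c-t+1) * (2 * (N3' (j-t+1) * (s j : ℤ))) :=
    Finset.sum_le_sum h2
  have hsum2 : ∑ j ∈ Finset.Icc q c, (c-t+1) * (2 * (N3' (j-t+1) * (s j : ℤ)))
      = (c-t+1) * (t*(t+1)) := by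
    rw [← Finset.mul_sum, ← Finset.mul_sum, ← hyp, h3t]
  have key : 6 * (N4' (t - 1) + ∑ j ∈ Finset.Icc q c, N4' (j - t) * (s j : ℤ)) ≤
      t * (t + 1) * (c + 3) := by
    rw [mul_add, Finset.mul_sum]
    calc 6 * N4' (t-1) + ∑ j ∈ Finset.Icc q c, 6 * (N4' (j-t) * (s j : ℤ))
        ≤ t*(t+1)*(t+2) + (c-t+1) * (t*(t+1)) := by
          rw [h1]; exact add_le_add (le_refl _) (hsum.trans_eq hsum2)
      _ = t * (t + 1) * (c + 3) := by ring
  rw [Int.le_ediv_iff_mul_le (by norm_num : (0:ℤ) < 6)]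
  linarith
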